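/- Let q* : ℝ → ℝ be the 2π-periodic saw-tooth function with q*(t) = t for t ∈ [0, π] and q*(t) = 2π − t for t ∈ [π, 2π], and let W : ℝ → ℝ be continuous. Then for every ϑ ∈ (0, π), ∫₀^{2π} W(q*(s) − q*(s + ϑ)) ds = (π − ϑ)(W(−ϑ) + W(ϑ)) + ∫_{π−ϑ}^{π} ( W(2s − 2π + ϑ) + W(−2s + 2π − ϑ) ) ds. -/

import Mathlib

open Set

lemma sawtooth_eqon_integral {f g : ℝ → ℝ} {a b : ℝ} (hg : Continuous g)
    (h : EqOn f g (uIcc a b)) :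
    IntervalIntegrable f MeasureTheory.volume a b ∧
      (∫ s in a..b, f s) = ∫ s in a..b, g s := by
  have hae : f =ᵐ[MeasureTheory.volume.restrict (uIoc a b)] g := by
    filter_upwards [MeasureTheory.self_mem_ae_restrict measurableSet_uIoc] with x hx
    exact h (uIoc_subset_uIcc hx)
  refine ⟨(hg.intervalIntegrable a b).congr_ae hae.symm, ?_⟩
  exact intervalIntegral.integral_congr h

/-- Explicit formula for the saw-tooth averaged interaction: for the `2π`-periodic
saw-tooth `q*` (`q*(t) = t` on `[0,π]`, `q*(t) = 2π − t` on `[π,2π]`) and continuous `W`,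
for every `ϑ ∈ (0,π)`,
`∫₀^{2π} W(q*(s) − q*(s+ϑ)) ds = (π−ϑ)(W(−ϑ)+W(ϑ)) + ∫_{π−ϑ}^{π} (W(2s−2π+ϑ) + W(−2s+2π−ϑ)) ds`. -/
theorem sawtooth_average_formula
    (qstar : ℝ → ℝ)
    (hper : Function.Periodic qstar (2 * Real.pi))
    (h₁ : ∀ t ∈ Icc (0:ℝ) Real.pi, qstar t = t)
    (h₂ : ∀ t ∈ Icc Real.pi (2 * Real.pi), qstar t = 2 * Real.pi - t)
    (W : ℝ → ℝ) (hW : Continuous W) :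
    ∀ ϑ ∈ Ioo (0:ℝ) Real.pi,
      (∫ s in (0:ℝ)..(2 * Real.pi), W (qstar s - qstar (s + ϑ)))
        = (Real.pi - ϑ) * (W (-ϑ) + W ϑ)
          + ∫ s in (Real.pi - ϑ)..Real.pi,
              (W (2 * s - 2 * Real.pi + ϑ) + W (-(2 * s) + 2 * Real.pi - ϑ)) := by
  intro ϑ hϑ
  obtain ⟨hϑ0, hϑπ⟩ := hϑ
  have hπ := Real.pi_pos
  set π := Real.pi
  set f : ℝ → ℝ := fun s => W (qstar s - qstar (s + ϑ)) with hf
  -- piece 1 : [0, π-ϑ]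
  have p1 := sawtooth_eqon_integral (f := f) (g := fun _ => W (-ϑ)) (a := 0) (b := π - ϑ)
    continuous_const (by
      rw [uIcc_of_le (by linarith)]
      intro s hs
      obtain ⟨hs0, hs1⟩ := hs
      have e1 : qstar s = s := h₁ s ⟨hs0, by linarith⟩
      have e2 : qstar (s + ϑ) = s + ϑ := h₁ (s + ϑ) ⟨by linarith, by linarith⟩
      simp only [f, e1, e2]; ring_nf)
  -- piece 2 : [π-ϑ, π]
  have p2 := sawtooth_eqon_integral (f := f)
    (g := fun s => W (2 * s - 2 * π + ϑ)) (a := π - ϑ) (b := π)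
    (by fun_prop) (by
      rw [uIcc_of_le (by linarith)]
      intro s hs
      obtain ⟨hs0, hs1⟩ := hs
      have e1 : qstar s = s := h₁ s ⟨by linarith, hs1⟩
      have e2 : qstar (s + ϑ) = 2 * π - (s + ϑ) :=
        h₂ (s + ϑ) ⟨by linarith, by linarith⟩
      simp only [f, e1, e2]; ring_nf)
  -- piece 3 : [π, 2π-ϑ]
  have p3 := sawtooth_eqon_integral (f := f) (g := fun _ => W ϑ) (a := π) (b := 2 * π - ϑ)
    continuous_const (by
      rw [uIcc_of_le (by linarith)]
      intro s hs
      obtain ⟨hs0, hs1⟩ := hs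
      have e1 : qstar s = 2 * π - s := h₂ s ⟨hs0, by linarith⟩
      have e2 : qstar (s + ϑ) = 2 * π - (s + ϑ) :=
        h₂ (s + ϑ) ⟨by linarith, by linarith⟩
      simp only [f, e1, e2]; ring_nf)
  -- piece 4 : [2π-ϑ, 2π]
  have p4 := sawtooth_eqon_integral (f := f)
    (g := fun s => W (4 * π - 2 * s - ϑ)) (a := 2 * π - ϑ) (b := 2 * π)
    (by fun_prop) (by
      rw [uIcc_of_le (by linarith)]
      intro s hs
      obtain ⟨hs0, hs1⟩ := hs
      have e1 : qstar s = 2 * π - s := h₂ s ⟨by linarith, hs1⟩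
      have e2 : qstar (s + ϑ) = s + ϑ - 2 * π := by
        have := hper (s + ϑ - 2 * π)
        rw [sub_add_cancel] at this
        rw [this]
        exact h₁ (s + ϑ - 2 * π) ⟨by linarith, by linarith⟩
      simp only [f, e1, e2]; ring_nf)
  -- split the integral
  have split : (∫ s in (0:ℝ)..(2 * π), f s)
      = (∫ s in (0:ℝ)..(π - ϑ), f s) + (∫ s in (π - ϑ)..π, f s)
        + (∫ s in π..(2 * π - ϑ), f s) + (∫ s in (2 * π - ϑ)..(2 * π), f s) := by
    rw [intervalIntegral.integral_add_adjacent_intervals p1.1 p2.1,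
      intervalIntegral.integral_add_adjacent_intervals (p1.1.trans p2.1) p3.1,
      intervalIntegral.integral_add_adjacent_intervals ((p1.1.trans p2.1).trans p3.1) p4.1]
  -- evaluate piece 4 by substitution
  have sub4 : (∫ s in (2 * π - ϑ)..(2 * π), W (4 * π - 2 * s - ϑ))
      = ∫ s in (π - ϑ)..π, W (-(2 * s) + 2 * π - ϑ) := by
    have := intervalIntegral.integral_comp_add_right
      (a := π - ϑ) (b := π) (fun s => W (4 * π - 2 * s - ϑ)) π
    have h2 : π - ϑ + π = 2 * π - ϑ := by ring
    have h3 : π + π = 2 * π := by ring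
    rw [h2, h3] at this
    rw [← this]
    apply intervalIntegral.integral_congr
    intro x _
    simp only
    ring_nf
  have addW : (∫ s in (π - ϑ)..π,
      (W (2 * s - 2 * π + ϑ) + W (-(2 * s) + 2 * π - ϑ)))
      = (∫ s in (π - ϑ)..π, W (2 * s - 2 * π + ϑ))
        + ∫ s in (π - ϑ)..π, W (-(2 * s) + 2 * π - ϑ) := by
    apply intervalIntegral.integral_add <;>
      exact Continuous.intervalIntegrable (by fun_prop) _ _
  rw [split, p1.2, p2.2, p3.2, p4.2, sub4, addW,
    intervalIntegral.integral_const, intervalIntegral.integral_const]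
  simp only [smul_eq_mul]
  ring
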